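/- arXiv:1510.07301 — 2 statements merged into one kernel-verified Lean document; each statement's English description precedes it below -/
import Mathlib

section
/- For ν, μ ∈ {0,1}, positive integers 2N+ν and 2M+μ, and any integer k: the number of partitions of n into parts ≤ 2N+ν with at most 2M+μ parts and BG-rank equal to k has generating function Σ over such partitions of q^n equal to q^{2k²−k} [N+M+μ choose N+k]_{q²} [N+ν+M choose M+k]_{q²}. -/
def IsDistinctPartition (π : List ℕ) : Prop :=
  π.Chain' (· > ·) ∧ ∀ p ∈ π, 0 < p

def IsPartition (π : List ℕ) : Prop :=
  π.Chain' (· ≥ ·) ∧ ∀ p ∈ π, 0 < p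

def oddIdxOdd (π : List ℕ) : ℕ :=
  ((π.zipIdx.map Prod.swap).filter fun p => p.1 % 2 == 0 && p.2 % 2 == 1).length

def evenIdxOdd (π : List ℕ) : ℕ :=
  ((π.zipIdx.map Prod.swap).filter fun p => p.1 % 2 == 1 && p.2 % 2 == 1).length

def bgRank (π : List ℕ) : ℤ := (oddIdxOdd π : ℤ) - evenIdxOdd π

def altSum : List ℕ → ℤ
  | [] => 0
  | a :: t => (a : ℤ) - altSum t

noncomputable def gaussPoly : ℕ → ℕ → Polynomial ℚ
  | _, 0 => 1
  | 0, _ + 1 => 0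
  | m + 1, r + 1 => gaussPoly m r + Polynomial.X ^ (r + 1) * gaussPoly m (r + 1)

noncomputable def gaussZ (m : ℕ) (r : ℤ) : Polynomial ℚ :=
  if 0 ≤ r then gaussPoly m r.toNat else 0


open Polynomial

lemma enumFrom_filter_parity (l : List ℕ) : ∀ n : ℕ,
    (((l.zipIdx (n+1)).map Prod.swap).filter fun p => p.1 % 2 == 0 && p.2 % 2 == 1).length =
      (((l.zipIdx n).map Prod.swap).filter fun p => p.1 % 2 == 1 && p.2 % 2 == 1).length ∧
    (((l.zipIdx (n+1)).map Prod.swap).filter fun p => p.1 % 2 == 1 && p.2 % 2 == 1).length =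
      (((l.zipIdx n).map Prod.swap).filter fun p => p.1 % 2 == 0 && p.2 % 2 == 1).length := by
  induction l with
  | nil => simp
  | cons a t ih =>
    intro n
    have h2 : (n+1) % 2 == 0 ↔ n % 2 == 1 := by constructor <;> (simp; omega)
    have h3 : (n+1) % 2 == 1 ↔ n % 2 == 0 := by constructor <;> (simp; omega)
    simp only [List.zipIdx_cons, List.map_cons, List.filter_cons]
    rcases (ih (n+1)) with ⟨i1, i2⟩
    constructor
    · by_cases ha : a % 2 == 1
      · by_cases hn : n % 2 == 1
        · simp [ha, hn, h2.2 hn, i1]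
        · have : ¬ ((n+1) % 2 == 0) := fun h => hn (h2.1 h)
          simp [ha, hn, this, i1]
      · simp [ha, i1]
    · by_cases ha : a % 2 == 1
      · by_cases hn : n % 2 == 0
        · simp [ha, hn, h3.2 hn, i2]
        · have : ¬ ((n+1) % 2 == 1) := fun h => hn (h3.1 h)
          simp [ha, hn, this, i2]
      · simp [ha, i2]

lemma oddIdxOdd_cons (a : ℕ) (t : List ℕ) :
    oddIdxOdd (a :: t) = (if a % 2 = 1 then 1 else 0) + evenIdxOdd t := by
  unfold oddIdxOdd evenIdxOdd
  rw [show ((a :: t).zipIdx.map Prod.swap) = (0, a) :: (t.zipIdx 1).map Prod.swap from rfl, List.filter_cons]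
  rcases enumFrom_filter_parity t 0 with ⟨i1, _⟩
  by_cases ha : a % 2 = 1
  · simp [ha, i1]; omega
  · simp [ha, i1]

lemma evenIdxOdd_cons (a : ℕ) (t : List ℕ) :
    evenIdxOdd (a :: t) = oddIdxOdd t := by
  unfold oddIdxOdd evenIdxOdd
  rw [show ((a :: t).zipIdx.map Prod.swap) = (0, a) :: (t.zipIdx 1).map Prod.swap from rfl, List.filter_cons]
  rcases enumFrom_filter_parity t 0 with ⟨_, i2⟩
  simp [i2]

lemma bgRank_nil : bgRank [] = 0 := by simp [bgRank, oddIdxOdd, evenIdxOdd]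

lemma bgRank_cons (a : ℕ) (t : List ℕ) :
    bgRank (a :: t) = (a % 2 : ℕ) - bgRank t := by
  unfold bgRank
  rw [oddIdxOdd_cons, evenIdxOdd_cons]
  by_cases ha : a % 2 = 1
  · simp [ha]; ring
  · have : a % 2 = 0 := by omega
    simp [ha, this]

lemma bgRank_append_replicate_zero (l : List ℕ) (j : ℕ) :
    bgRank (l ++ List.replicate j 0) = bgRank l := by
  induction l with
  | nil =>
    simp only [List.nil_append]
    induction j with
    | zero => rfl
    | succ j ih => rw [List.replicate_succ, bgRank_cons, ih]; simp [bgRank_nil]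
  | cons a t ih => rw [List.cons_append, bgRank_cons, ih, bgRank_cons]

lemma bgRank_map_succ (l : List ℕ) :
    bgRank (l.map (· + 1)) = (l.length % 2 : ℕ) - bgRank l := by
  induction l with
  | nil => simp [bgRank_nil]
  | cons a t ih =>
    rw [List.map_cons, bgRank_cons, ih, bgRank_cons]
    simp only [List.length_cons]
    omega

lemma bgRank_map_pred (l : List ℕ) (hl : ∀ x ∈ l, 0 < x) :
    bgRank (l.map (· - 1)) = (l.length % 2 : ℕ) - bgRank l := by
  have h : (l.map (· - 1)).map (· + 1) = l := by
    rw [List.map_map]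
    conv_rhs => rw [← List.map_id l]
    refine List.map_congr_left ?_
    intro x hx
    have := hl x hx
    simp; omega
  have := bgRank_map_succ (l.map (· - 1))
  rw [h] at this
  simp only [List.length_map] at this
  omega


lemma gp_zero_right (m : ℕ) : gaussPoly m 0 = 1 := by cases m <;> rfl

lemma gp_succ_succ (m r : ℕ) :
    gaussPoly (m+1) (r+1) = gaussPoly m r + X ^ (r + 1) * gaussPoly m (r + 1) := rfl

lemma gp_eq_zero_of_lt : ∀ m r : ℕ, m < r → gaussPoly m r = 0 := by
  intro m
  induction m with
  | zero => intro r h; cases r with | zero => omega | succ s => rfl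
  | succ m ih =>
    intro r h
    cases r with
    | zero => omega
    | succ s =>
      rw [gp_succ_succ, ih s (by omega), ih (s+1) (by omega)]
      simp

lemma gp_self (m : ℕ) : gaussPoly m m = 1 := by
  induction m with
  | zero => rfl
  | succ m ih => rw [gp_succ_succ, ih, gp_eq_zero_of_lt m (m+1) (by omega)]; simp

lemma gp_one (m : ℕ) : gaussPoly m 1 = ∑ i ∈ Finset.range m, X ^ i := by
  induction m with
  | zero => simpa using gp_eq_zero_of_lt 0 1 (by omega)
  | succ m ih =>
    rw [show (1:ℕ) = 0 + 1 from rfl, gp_succ_succ, gp_zero_right, ih, geom_sum_succ]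
    ring

lemma gp_pascal (m : ℕ) : ∀ r : ℕ, 1 ≤ r → r ≤ m + 1 →
    gaussPoly (m+1) r = gaussPoly m r + X ^ (m + 1 - r) * gaussPoly m (r-1) := by
  induction m with
  | zero =>
    intro r h1 h2
    have : r = 1 := by omega
    subst this
    rw [show (1:ℕ) = 0 + 1 from rfl, gp_succ_succ]
    simp [gp_zero_right, gp_eq_zero_of_lt 0 1 (by omega)]
  | succ m ih =>
    intro r h1 h2
    obtain ⟨s, rfl⟩ : ∃ s, r = s + 1 := ⟨r - 1, by omega⟩
    simp only [Nat.add_sub_cancel]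
    rw [gp_succ_succ]
    rcases Nat.lt_or_ge s (m+1) with hs | hs
    · rcases Nat.eq_or_lt_of_le h1 with h | h
      · -- s = 0
        have : s = 0 := by omega
        subst this
        simp only [show (0:ℕ)+1 = 1 from rfl, Nat.sub_self]
        rw [gp_zero_right, gp_one]
        rw [show m + 1 + 1 - 1 = m + 1 from by omega]
        have e : X * ∑ i ∈ Finset.range (m+1), (X:Polynomial ℚ) ^ i + 1
            = (∑ i ∈ Finset.range (m+1), X^i) + X^(m+1) := by
          rw [← geom_sum_succ, Finset.sum_range_succ]
        linear_combination e
      · -- 1 ≤ s ≤ m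
        have hs1 : 1 ≤ s := by omega
        obtain ⟨d, rfl⟩ : ∃ d, m = s + d := ⟨m - s, by omega⟩
        have hL1 : gaussPoly (s+d+1) s
            = gaussPoly (s+d) s + X ^ (d+1) * gaussPoly (s+d) (s-1) := by
          have := ih s hs1 (by omega)
          rwa [show s + d + 1 - s = d + 1 from by omega] at this
        have hL2 : gaussPoly (s+d+1) (s+1)
            = gaussPoly (s+d) (s+1) + X ^ d * gaussPoly (s+d) s := by
          have := ih (s+1) (by omega) (by omega)
          rwa [show s + d + 1 - (s+1) = d from by omega,
            show s + 1 - 1 = s from by omega] at this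
        have hR1 : gaussPoly (s+d+1) (s+1)
            = gaussPoly (s+d) s + X ^ (s+1) * gaussPoly (s+d) (s+1) := gp_succ_succ _ _
        have hR2 : gaussPoly (s+d+1) s
            = gaussPoly (s+d) (s-1) + X ^ s * gaussPoly (s+d) s := by
          obtain ⟨u, rfl⟩ : ∃ u, s = u + 1 := ⟨s - 1, by omega⟩
          simp only [Nat.add_sub_cancel]
          rw [show u+1+d = u+d+1 from by omega]
          exact gp_succ_succ (u+d+1) u
        rw [show s + d + 1 + 1 - (s + 1) = d + 1 from by omega]
        conv_lhs => rw [hL1, hL2]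
        conv_rhs => rw [hR1, hR2]
        ring
    · -- s = m+1
      have : s = m + 1 := by omega
      subst this
      rw [gp_eq_zero_of_lt (m+1) (m+2) (by omega)]
      rw [show m + 1 + 1 - (m + 1 + 1) = 0 from by omega, gp_self]
      simp

lemma gp_symm (m : ℕ) : ∀ r : ℕ, r ≤ m → gaussPoly m r = gaussPoly m (m - r) := by
  induction m with
  | zero => intro r h; interval_cases r; simp
  | succ m ih =>
    intro r h
    rcases Nat.eq_zero_or_pos r with h0 | h0
    · subst h0; simp [gp_zero_right, gp_self]
    rcases Nat.eq_or_lt_of_le h with he | hl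
    · subst he; simp [gp_zero_right, gp_self]
    -- 1 ≤ r ≤ m
    obtain ⟨s, rfl⟩ : ∃ s, r = s + 1 := ⟨r - 1, by omega⟩
    rw [gp_succ_succ]
    have e1 : m + 1 - (s + 1) = m - s := by omega
    rw [e1]
    rw [gp_pascal m (m - s) (by omega) (by omega)]
    have e2 : m + 1 - (m - s) = s + 1 := by omega
    have e3 : m - s - 1 = m - (s+1) := by omega
    rw [e2, e3]
    rw [← ih s (by omega), ← ih (s+1) (by omega)]

lemma gz_neg {m : ℕ} {r : ℤ} (h : r < 0) : gaussZ m r = 0 := by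
  simp [gaussZ, not_le.2 h]

lemma gz_of_nonneg {m : ℕ} {r : ℤ} (h : 0 ≤ r) : gaussZ m r = gaussPoly m r.toNat := by
  simp [gaussZ, h]

lemma gz_gt {m : ℕ} {r : ℤ} (h : (m : ℤ) < r) : gaussZ m r = 0 := by
  rw [gz_of_nonneg (by omega), gp_eq_zero_of_lt m r.toNat (by omega)]

lemma gz_zero (m : ℕ) : gaussZ m 0 = 1 := by
  rw [gz_of_nonneg le_rfl]; exact gp_zero_right m

lemma gz_self (m : ℕ) : gaussZ m m = 1 := by
  rw [gz_of_nonneg (by positivity)]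
  simpa using gp_self m

lemma gz_pascal2 (m : ℕ) (s : ℤ) :
    gaussZ (m+1) s = gaussZ m (s-1) + X ^ s.toNat * gaussZ m s := by
  rcases lt_trichotomy s 0 with h | h | h
  · rw [gz_neg h, gz_neg (by omega), gz_neg h]; simp
  · subst h; simp [gz_zero, gz_neg (show (-1:ℤ) < 0 from by norm_num)]
  · obtain ⟨r, rfl⟩ : ∃ r : ℕ, s = (r : ℤ) + 1 := ⟨(s-1).toNat, by omega⟩
    rw [gz_of_nonneg (by omega), gz_of_nonneg (by omega), gz_of_nonneg (by omega)]
    rw [show ((r:ℤ) + 1 - 1).toNat = r from by omega, show ((r:ℤ)+1).toNat = r + 1 from by omega]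
    exact gp_succ_succ m r

lemma gz_pascal1 (m : ℕ) (s : ℤ) (hs : s ≤ m + 1) :
    gaussZ (m+1) s = gaussZ m s + X ^ ((m:ℤ) + 1 - s).toNat * gaussZ m (s-1) := by
  rcases lt_trichotomy s 0 with h | h | h
  · rw [gz_neg h, gz_neg h, gz_neg (by omega)]; simp
  · subst h
    simp [gz_zero, gz_neg (show (-1:ℤ) < 0 from by norm_num)]
  · obtain ⟨r, rfl⟩ : ∃ r : ℕ, s = (r : ℤ) + 1 := ⟨(s-1).toNat, by omega⟩
    rw [gz_of_nonneg (by omega), gz_of_nonneg (by omega), gz_of_nonneg (by omega)]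
    rw [show ((r:ℤ) + 1 - 1).toNat = r from by omega, show ((r:ℤ)+1).toNat = r + 1 from by omega,
      show ((m:ℤ) + 1 - ((r:ℤ)+1)).toNat = m + 1 - (r+1) from by omega]
    exact gp_pascal m (r+1) (by omega) (by omega)

lemma gz_symm (m : ℕ) (r : ℤ) : gaussZ m r = gaussZ m ((m : ℤ) - r) := by
  rcases lt_trichotomy r 0 with h | h | h
  · rw [gz_neg h, gz_gt (show (m:ℤ) < m - r from by omega)]
  · subst h; simp [gz_zero, gz_self]
  · rcases le_or_gt r m with h2 | h2
    · rw [gz_of_nonneg (by omega), gz_of_nonneg (by omega),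
        show ((m:ℤ) - r).toNat = m - r.toNat from by omega]
      exact gp_symm m r.toNat (by omega)
    · rw [gz_gt h2, gz_neg (by omega)]

open PowerSeries in
noncomputable def gg (m : ℕ) (r : ℤ) : PowerSeries ℚ :=
  Polynomial.aeval (PowerSeries.X ^ 2 : PowerSeries ℚ) (gaussZ m r)

namespace GG
open PowerSeries

lemma neg {m : ℕ} {r : ℤ} (h : r < 0) : gg m r = 0 := by
  unfold gg; rw [gz_neg h, map_zero]

lemma gt {m : ℕ} {r : ℤ} (h : (m : ℤ) < r) : gg m r = 0 := by
  unfold gg; rw [gz_gt h, map_zero]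

lemma zero (m : ℕ) : gg m 0 = 1 := by unfold gg; rw [gz_zero, map_one]

lemma self (m : ℕ) : gg m m = 1 := by unfold gg; rw [gz_self, map_one]

lemma pascal1 (m : ℕ) (s : ℤ) (hs : s ≤ m + 1) :
    gg (m+1) s = gg m s + PowerSeries.X ^ (2 * ((m:ℤ) + 1 - s).toNat) * gg m (s-1) := by
  unfold gg
  rw [gz_pascal1 m s hs, map_add, map_mul, map_pow, Polynomial.aeval_X, pow_mul]

lemma pascal2 (m : ℕ) (s : ℤ) :
    gg (m+1) s = gg m (s-1) + PowerSeries.X ^ (2 * s.toNat) * gg m s := by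
  unfold gg
  rw [gz_pascal2 m s, map_add, map_mul, map_pow, Polynomial.aeval_X, pow_mul]

lemma symm (m : ℕ) (r : ℤ) : gg m r = gg m ((m : ℤ) - r) := by
  unfold gg; rw [← gz_symm]

end GG

lemma t_nonneg (k : ℤ) : 0 ≤ 2 * k ^ 2 - k := by
  rcases le_or_gt k 0 with h | h <;> nlinarith

noncomputable def RS (P L : ℕ) (k : ℤ) : PowerSeries ℚ :=
  PowerSeries.X ^ (2 * k ^ 2 - k).toNat *
    (gg (P/2 + (L+1)/2) ((P/2 : ℕ) + k) * gg ((P+1)/2 + L/2) ((L/2 : ℕ) + k))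

lemma gg_congr {m m' : ℕ} {r r' : ℤ} (hm : m = m') (hr : r = r') :
    gg m r = gg m' r' := by subst hm; subst hr; rfl

open PowerSeries in
lemma RS_rec (P L : ℕ) (hP : 1 ≤ P) (k : ℤ) :
    RS P (L+1) k = RS P L k +
      PowerSeries.X ^ (L+1) * RS (P-1) (L+1) ((((L+1) % 2 : ℕ) : ℤ) - k) := by
  obtain ⟨A, B, hA, hB, hA', hB', hB1, hAB⟩ : ∃ A B, P / 2 = A ∧ (P+1)/2 = B ∧
      (P-1)/2 = B - 1 ∧ (P-1+1)/2 = A ∧ 1 ≤ B ∧ A ≤ B := 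
    ⟨P/2, (P+1)/2, rfl, rfl, by omega, by omega, by omega, by omega⟩
  have e1 : ((2*k^2 - k).toNat : ℤ) = 2*k^2 - k := Int.toNat_of_nonneg (t_nonneg k)
  rcases Nat.even_or_odd L with ⟨c, hc⟩ | ⟨c, hc⟩
  · -- L = c + c, L+1 odd, k' = 1 - k
    subst hc
    have h1 : (c + c + 1 + 1) / 2 = c + 1 := by omega
    have h2 : (c + c + 1) / 2 = c := by omega
    have h3 : (c + c) / 2 = c := by omega
    have h4 : (c + c + 1) % 2 = 1 := by omega
    unfold RS
    rw [h1, h2, h3, h4, hA, hB, hA', hB']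
    have hsym1 : gg (B - 1 + (c+1)) (((B-1 : ℕ) : ℤ) + (((1:ℕ):ℤ) - k))
        = gg (B + c) ((c : ℤ) + k) := by
      rw [GG.symm (B - 1 + (c+1)) _]
      exact gg_congr (by omega) (by rw [Nat.cast_sub hB1]; push_cast; omega)
    have hsym2 : gg (A + c) ((c : ℤ) + (((1:ℕ):ℤ) - k))
        = gg (A + c) ((A : ℤ) + k - 1) := by
      rw [GG.symm (A + c) _]
      exact gg_congr rfl (by push_cast; omega)
    rw [hsym1, hsym2]
    by_cases hk : k ≤ (c : ℤ) + 1
    · have hpas := GG.pascal1 (A + c) ((A : ℤ) + k) (by push_cast; omega)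
      have he : (((A+c : ℕ) : ℤ) + 1 - ((A : ℤ) + k)) = ((c:ℤ) + 1 - k) := by
        push_cast; ring
      rw [he] at hpas
      rw [show A + (c+1) = (A + c) + 1 from by omega, hpas]
      have e3 : ((((c:ℤ) + 1 - k)).toNat : ℤ) = (c:ℤ) + 1 - k :=
        Int.toNat_of_nonneg (by omega)
      have e2 : ((2*(1-k)^2 - (1-k)).toNat : ℤ) = 2*k^2 - 3*k + 1 := by
        rw [Int.toNat_of_nonneg (t_nonneg (1-k))]; ring
      have hX : (PowerSeries.X : PowerSeries ℚ) ^ ((2*k^2 - k).toNat)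
            * PowerSeries.X ^ (2 * ((c:ℤ) + 1 - k).toNat)
          = PowerSeries.X ^ (c + c + 1) * PowerSeries.X ^ ((2*(1-k)^2 - (1-k)).toNat) := by
        rw [← pow_add, ← pow_add]
        congr 1
        have hsum : ((2*k^2 - k).toNat : ℤ) + 2*((((c:ℤ)+1-k).toNat : ℕ) : ℤ)
            = (c:ℤ) + c + 1 + ((2*(1-k)^2 - (1-k)).toNat : ℤ) := by
          rw [e1, e2, e3]; ring
        omega
      have he2 : ((1:ℕ):ℤ) - k = 1 - k := by push_cast; ring
      rw [he2]
      linear_combination (gg (B + c) ((c:ℤ) + k) * gg (A + c) ((A:ℤ) + k - 1)) * hX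
    · rw [GG.gt (show ((A + (c+1) : ℕ) : ℤ) < (A:ℤ) + k from by push_cast; omega),
        GG.gt (show ((A + c : ℕ) : ℤ) < (A:ℤ) + k from by push_cast; omega),
        GG.gt (show ((A + c : ℕ) : ℤ) < (A:ℤ) + k - 1 from by push_cast; omega)]
      simp
  · -- L = 2c+1, L+1 even, k' = -k
    subst hc
    have h1 : (2*c + 1 + 1 + 1) / 2 = c + 1 := by omega
    have h2 : (2*c + 1 + 1) / 2 = c + 1 := by omega
    have h3 : (2*c + 1) / 2 = c := by omega
    have h4 : (2*c + 1 + 1) % 2 = 0 := by omega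
    unfold RS
    rw [h1, h2, h3, h4, hA, hB, hA', hB']
    have hsym1 : gg (B - 1 + (c+1)) (((B-1 : ℕ) : ℤ) + (((0:ℕ):ℤ) - k))
        = gg (B + c) (((c+1 : ℕ) : ℤ) + k) := by
      rw [GG.symm (B - 1 + (c+1)) _]
      exact gg_congr (by omega) (by rw [Nat.cast_sub hB1]; push_cast; omega)
    have hsym2 : gg (A + (c+1)) (((c+1 : ℕ) : ℤ) + (((0:ℕ):ℤ) - k))
        = gg (A + (c+1)) ((A : ℤ) + k) := by
      rw [GG.symm (A + (c+1)) _]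
      exact gg_congr rfl (by push_cast; omega)
    rw [hsym1, hsym2]
    by_cases hk : 0 ≤ (c : ℤ) + 1 + k
    · have hpas := GG.pascal2 (B + c) (((c+1:ℕ) : ℤ) + k)
      have he : (((c+1:ℕ) : ℤ) + k - 1) = (c:ℤ) + k := by push_cast; ring
      rw [he] at hpas
      rw [show B + (c+1) = (B + c) + 1 from by omega, hpas]
      have e3 : ((((c+1:ℕ):ℤ) + k).toNat : ℤ) = (c:ℤ) + 1 + k :=
        Int.toNat_of_nonneg (by push_cast; omega) |>.trans (by push_cast; ring)
      have e2 : ((2*(-k)^2 - (-k)).toNat : ℤ) = 2*k^2 + k := by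
        rw [Int.toNat_of_nonneg (t_nonneg (-k))]; ring
      have hX : (PowerSeries.X : PowerSeries ℚ) ^ ((2*k^2 - k).toNat)
            * PowerSeries.X ^ (2 * ((((c+1:ℕ):ℤ) + k).toNat))
          = PowerSeries.X ^ (2*c + 1 + 1) * PowerSeries.X ^ ((2*(-k)^2 - (-k)).toNat) := by
        rw [← pow_add, ← pow_add]
        congr 1
        have hsum : ((2*k^2 - k).toNat : ℤ) + 2*(((((c+1:ℕ):ℤ) + k).toNat : ℕ) : ℤ)
            = 2*(c:ℤ) + 1 + 1 + ((2*(-k)^2 - (-k)).toNat : ℤ) := by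
          rw [e1, e2, e3]; ring
        omega
      have he2 : ((0:ℕ):ℤ) - k = -k := by push_cast; ring
      rw [he2]
      linear_combination (gg (B + c) (((c+1:ℕ):ℤ) + k) * gg (A + (c+1)) ((A:ℤ) + k)) * hX
    · push_cast at hk
      simp [GG.neg (show (((c+1:ℕ):ℤ) + k) < 0 from by push_cast; omega),
        GG.neg (show ((c:ℤ) + k) < 0 from by omega),
        GG.neg (show ((c:ℤ) + 1 + k) < 0 from by omega)]


section ListHelpers
open List

lemma sum_map_succ (l : List ℕ) : (l.map (· + 1)).sum = l.sum + l.length := by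
  induction l with
  | nil => simp
  | cons a t ih => simp [ih]; omega

lemma sum_map_pred (l : List ℕ) (h : ∀ x ∈ l, 0 < x) :
    (l.map (· - 1)).sum + l.length = l.sum := by
  induction l with
  | nil => simp
  | cons a t ih =>
    have ha := h a (by simp)
    have := ih (fun x hx => h x (by simp [hx]))
    simp only [List.map_cons, List.sum_cons, List.length_cons]
    omega

lemma map_pred_succ (l : List ℕ) (h : ∀ x ∈ l, 0 < x) :
    (l.map (· - 1)).map (· + 1) = l := by
  rw [List.map_map]
  conv_rhs => rw [← List.map_id l]
  refine List.map_congr_left fun x hx => ?_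
  have := h x hx
  simp; omega

lemma map_succ_pred (l : List ℕ) : (l.map (· + 1)).map (· - 1) = l := by
  rw [List.map_map]
  conv_rhs => rw [← List.map_id l]
  exact List.map_congr_left fun x _ => by simp

lemma length_le_sum (l : List ℕ) (h : ∀ x ∈ l, 0 < x) : l.length ≤ l.sum := by
  induction l with
  | nil => simp
  | cons a t ih =>
    have := h a (by simp)
    have := ih (fun x hx => h x (by simp [hx]))
    simp only [List.length_cons, List.sum_cons]
    omega

lemma pairwise_ge_of_chain' {l : List ℕ} (h : l.Chain' (· ≥ ·)) :
    l.Pairwise (· ≥ ·) := List.isChain_iff_pairwise.1 h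

lemma chain'_of_pairwise_ge {l : List ℕ} (h : l.Pairwise (· ≥ ·)) :
    l.Chain' (· ≥ ·) := List.isChain_iff_pairwise.2 h

lemma chain'_ge_map_pred {l : List ℕ} (h : l.Chain' (· ≥ ·)) :
    (l.map (· - 1)).Chain' (· ≥ ·) := by
  show List.IsChain _ _
  rw [List.isChain_map]
  exact (show l.IsChain (· ≥ ·) from h).imp fun {a b} hab => by omega

lemma chain'_ge_map_succ {l : List ℕ} (h : l.Chain' (· ≥ ·)) :
    (l.map (· + 1)).Chain' (· ≥ ·) := by
  show List.IsChain _ _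
  rw [List.isChain_map]
  exact (show l.IsChain (· ≥ ·) from h).imp fun {a b} hab => by omega

lemma chain'_ge_append_zeros {l : List ℕ} (h : l.Chain' (· ≥ ·)) (j : ℕ) :
    (l ++ List.replicate j 0).Chain' (· ≥ ·) := by
  apply chain'_of_pairwise_ge
  rw [List.pairwise_append]
  exact ⟨pairwise_ge_of_chain' h, List.pairwise_replicate.2 (by simp),
    fun x _ y hy => by simp at hy; omega⟩

lemma chain'_ge_dropLast {l : List ℕ} (h : l.Chain' (· ≥ ·)) :
    l.dropLast.Chain' (· ≥ ·) :=
  chain'_of_pairwise_ge ((pairwise_ge_of_chain' h).sublist (List.dropLast_sublist l))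

lemma chain'_ge_takeWhile {l : List ℕ} (h : l.Chain' (· ≥ ·)) (p : ℕ → Bool) :
    (l.takeWhile p).Chain' (· ≥ ·) :=
  chain'_of_pairwise_ge ((pairwise_ge_of_chain' h).sublist (List.takeWhile_sublist p))

lemma getLast_eq_zero {l : List ℕ} (hc : l.Chain' (· ≥ ·)) {x : ℕ} (hx : x ∈ l)
    (hx0 : x = 0) (hne : l ≠ []) : l.getLast hne = 0 := by
  have hp := pairwise_ge_of_chain' hc
  have hl := (List.dropLast_append_getLast hne).symm
  rw [hl] at hp hx
  rw [List.pairwise_append] at hp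
  rcases List.mem_append.1 hx with h1 | h1
  · have := hp.2.2 x h1 (l.getLast hne) (by simp)
    omega
  · simp at h1; omega

lemma dropWhile_eq_zeros {l : List ℕ} (hc : l.Chain' (· ≥ ·)) :
    ∀ x ∈ l.dropWhile (fun y => y != 0), x = 0 := by
  intro x hx
  have hne : l.dropWhile (fun y => y != 0) ≠ [] := List.ne_nil_of_mem hx
  have h0 : (l.dropWhile (fun y => y != 0)).head hne = 0 := by
    have := List.head_dropWhile_not (fun y => y != 0) hne
    simpa using this
  have hp : (l.dropWhile (fun y => y != 0)).Pairwise (· ≥ ·) :=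
    (pairwise_ge_of_chain' hc).sublist (List.dropWhile_sublist _)
  rw [← List.cons_head_tail hne] at hp hx
  rcases List.mem_cons.1 hx with h1 | h1
  · omega
  · have := (List.pairwise_cons.1 hp).1 x h1
    omega

end ListHelpers


section Combinatorics
open List

def TPa (P L : ℕ) (k : ℤ) (n : ℕ) : Type :=
  {l : List ℕ // l.length = L ∧ l.Chain' (· ≥ ·) ∧ (∀ p ∈ l, p ≤ P) ∧
    l.sum = n ∧ bgRank l = k}

def TQa (P L : ℕ) (k : ℤ) (n : ℕ) : Type :=
  {l : List ℕ // l.length = L ∧ l.Chain' (· ≥ ·) ∧ (∀ p ∈ l, p ≤ P) ∧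
    (∀ p ∈ l, 0 < p) ∧ l.sum = n ∧ bgRank l = k}

lemma pmap_fin_val (P : ℕ) : ∀ (m : List ℕ) (h : ∀ x ∈ m, x < P + 1),
    (m.pmap (fun x hx => (⟨x, hx⟩ : Fin (P+1))) h).map Fin.val = m := by
  intro m
  induction m with
  | nil => intro h; rfl
  | cons a t ih => intro h; simp [List.pmap, ih]

lemma finite_base (P L : ℕ) : Finite {l : List ℕ // l.length = L ∧ ∀ p ∈ l, p ≤ P} := by
  have hfin : Finite {l : List (Fin (P+1)) // l.length = L} :=
    (List.finite_length_eq (Fin (P+1)) L).to_subtype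
  refine Finite.of_injective
    (fun x => (⟨x.1.pmap (fun y hy => (⟨y, hy⟩ : Fin (P+1)))
      (fun y hy => Nat.lt_succ_of_le (x.2.2 y hy)), by simp [x.2.1]⟩ :
        {l : List (Fin (P+1)) // l.length = L})) ?_
  intro a b hab
  apply Subtype.ext
  have := congrArg (fun z : {l : List (Fin (P+1)) // l.length = L} => z.1.map Fin.val) hab
  simpa [pmap_fin_val] using this

lemma finite_aux {Q : List ℕ → Prop} (P L : ℕ)
    (hQ : ∀ l, Q l → l.length = L ∧ ∀ p ∈ l, p ≤ P) : Finite {l : List ℕ // Q l} := by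
  have := finite_base P L
  refine Finite.of_injective
    (fun x => (⟨x.1, hQ x.1 x.2⟩ : {l : List ℕ // l.length = L ∧ ∀ p ∈ l, p ≤ P})) ?_
  intro a b h
  apply Subtype.ext
  have := congrArg
    (fun z : {l : List ℕ // l.length = L ∧ ∀ p ∈ l, p ≤ P} => z.1) h
  simpa using this

instance (P L : ℕ) (k : ℤ) (n : ℕ) : Finite (TPa P L k n) :=
  finite_aux P L (fun l hl => ⟨hl.1, hl.2.2.1⟩)

instance (P L : ℕ) (k : ℤ) (n : ℕ) : Finite (TQa P L k n) :=
  finite_aux P L (fun l hl => ⟨hl.1, hl.2.2.1⟩)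

lemma exists_zero_of_not_pos {l : List ℕ} (h : ¬ ∀ p ∈ l, 0 < p) : ∃ z ∈ l, z = 0 := by
  push_neg at h
  obtain ⟨z, hz1, hz2⟩ := h
  exact ⟨z, hz1, by omega⟩

lemma dropLast_concat_zero {l : List ℕ} (hch : l.Chain' (· ≥ ·))
    (h : ¬ ∀ p ∈ l, 0 < p) : l.dropLast ++ [0] = l := by
  obtain ⟨z, hz, hz0⟩ := exists_zero_of_not_pos h
  have hne : l ≠ [] := by intro hh; subst hh; simp at hz
  have hlast : l.getLast hne = 0 := getLast_eq_zero hch hz hz0 hne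
  conv_rhs => rw [← List.dropLast_append_getLast hne]
  rw [hlast]

/-- Split by whether all parts are positive. -/
def equivSplit (P L : ℕ) (k : ℤ) (n : ℕ) :
    TPa P (L+1) k n ≃ (TPa P L k n ⊕ TQa P (L+1) k n) where
  toFun x :=
    if h : ∀ p ∈ x.1, 0 < p then
      Sum.inr ⟨x.1, x.2.1, x.2.2.1, x.2.2.2.1, h, x.2.2.2.2⟩
    else
      Sum.inl ⟨x.1.dropLast, by
        have hlen := x.2.1
        have hch := x.2.2.1
        have hbd := x.2.2.2.1
        have hsum := x.2.2.2.2.1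
        have hbg := x.2.2.2.2.2
        have hl' : x.1.dropLast ++ [0] = x.1 := dropLast_concat_zero hch h
        refine ⟨by simp [hlen], chain'_ge_dropLast hch,
          fun p hp => hbd p (List.dropLast_subset x.1 hp), ?_, ?_⟩
        · have := congrArg List.sum hl'
          simp at this
          omega
        · have h2 : bgRank (x.1.dropLast ++ List.replicate 1 0) = bgRank x.1.dropLast :=
            bgRank_append_replicate_zero _ 1
          simp only [List.replicate_one] at h2
          rw [hl'] at h2
          omega⟩
  invFun := Sum.elim
    (fun m => ⟨m.1 ++ [0], by
      have hlen := m.2.1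
      have hch := m.2.2.1
      have hbd := m.2.2.2.1
      have hsum := m.2.2.2.2.1
      have hbg := m.2.2.2.2.2
      refine ⟨by simp [hlen], by simpa using chain'_ge_append_zeros hch 1,
        fun p hp => ?_, by simp [hsum], ?_⟩
      · rcases List.mem_append.1 hp with h | h
        · exact hbd p h
        · simp at h; omega
      · have h2 : bgRank (m.1 ++ List.replicate 1 0) = bgRank m.1 :=
          bgRank_append_replicate_zero _ 1
        simp only [List.replicate_one] at h2
        omega⟩)
    (fun y => ⟨y.1, y.2.1, y.2.2.1, y.2.2.2.1, y.2.2.2.2.2.1, y.2.2.2.2.2.2⟩)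
  left_inv := by
    intro x
    by_cases h : ∀ p ∈ x.1, 0 < p
    · simp only [dif_pos h]
      rfl
    · simp only [dif_neg h]
      exact Subtype.ext (dropLast_concat_zero x.2.2.1 h)
  right_inv := by
    rintro (m | y)
    · have h : ¬ ∀ p ∈ m.1 ++ [0], 0 < p := by
        intro hh
        have := hh 0 (by simp)
        omega
      dsimp only [Sum.elim_inl]
      split_ifs with h'
      · exact absurd h' h
      congr 1
      exact Subtype.ext (show (m.1 ++ [0]).dropLast = m.1 by simp)
    · have h : ∀ p ∈ y.1, 0 < p := y.2.2.2.2.1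
      dsimp only [Sum.elim_inr]
      split_ifs with h'
      · congr 1
      · exact absurd h h'

/-- Subtract one from each part. -/
def equivSub (P L : ℕ) (k : ℤ) (n : ℕ) (hP : 1 ≤ P) (hn : L + 1 ≤ n) :
    TQa P (L+1) k n ≃ TPa (P-1) (L+1) ((((L+1) % 2 : ℕ) : ℤ) - k) (n - (L+1)) where
  toFun x := ⟨x.1.map (· - 1), by
    have hlen := x.2.1
    have hch := x.2.2.1
    have hbd := x.2.2.2.1
    have hpos := x.2.2.2.2.1
    have hsum := x.2.2.2.2.2.1
    have hbg := x.2.2.2.2.2.2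
    refine ⟨by simp [hlen], chain'_ge_map_pred hch, ?_, ?_, ?_⟩
    · intro p hp
      rcases List.mem_map.1 hp with ⟨q, hq, rfl⟩
      have := hbd q hq
      have := hpos q hq
      omega
    · have := sum_map_pred x.1 hpos
      omega
    · have h2 := bgRank_map_pred x.1 hpos
      rw [h2, hlen, hbg]⟩
  invFun x := ⟨x.1.map (· + 1), by
    have hlen := x.2.1
    have hch := x.2.2.1
    have hbd := x.2.2.2.1
    have hsum := x.2.2.2.2.1
    have hbg := x.2.2.2.2.2
    refine ⟨by simp [hlen], chain'_ge_map_succ hch, ?_, ?_, ?_, ?_⟩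
    · intro p hp
      rcases List.mem_map.1 hp with ⟨q, hq, rfl⟩
      have := hbd q hq
      omega
    · intro p hp
      rcases List.mem_map.1 hp with ⟨q, hq, rfl⟩
      omega
    · have := sum_map_succ x.1
      rw [hsum, hlen] at this
      omega
    · have h2 := bgRank_map_succ x.1
      rw [hlen, hbg] at h2
      rw [h2]
      ring⟩
  left_inv := by
    intro x
    exact Subtype.ext (map_pred_succ x.1 x.2.2.2.2.1)
  right_inv := by
    intro x
    exact Subtype.ext (map_succ_pred x.1)

lemma TQa_empty (P L : ℕ) (k : ℤ) (n : ℕ) (hn : n < L + 1) : IsEmpty (TQa P (L+1) k n) := by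
  constructor
  rintro ⟨l, hlen, hch, hbd, hpos, hsum, hbg⟩
  have := length_le_sum l hpos
  omega

end Combinatorics


section Assembly
open List PowerSeries

lemma RS_L0 (P : ℕ) (k : ℤ) : RS P 0 k = if k = 0 then 1 else 0 := by
  unfold RS
  rcases lt_trichotomy k 0 with h | h | h
  · rw [GG.neg (show ((0/2 : ℕ) : ℤ) + k < 0 from by simp; omega)]
    rw [if_neg (by omega)]
    ring
  · subst h
    rw [if_pos rfl]
    have h1 : ((P/2 : ℕ) : ℤ) + 0 = ((P/2 + (0+1)/2 : ℕ) : ℤ) := by simp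
    rw [h1, GG.self, show ((0/2 : ℕ) : ℤ) + 0 = 0 from by simp, GG.zero]
    norm_num
  · rw [GG.gt (show ((P/2 + (0+1)/2 : ℕ) : ℤ) < ((P/2 : ℕ) : ℤ) + k from by simp; omega)]
    rw [if_neg (by omega)]
    ring

lemma RS_P0 (L : ℕ) (k : ℤ) : RS 0 L k = if k = 0 then 1 else 0 := by
  unfold RS
  rcases lt_trichotomy k 0 with h | h | h
  · rw [GG.neg (show ((0/2 : ℕ) : ℤ) + k < 0 from by simp; omega)]
    rw [if_neg (by omega)]
    ring
  · subst h
    rw [if_pos rfl]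
    rw [show ((0/2 : ℕ) : ℤ) + 0 = 0 from by simp, GG.zero]
    have h1 : ((L/2 : ℕ) : ℤ) + 0 = (((0+1)/2 + L/2 : ℕ) : ℤ) := by simp
    rw [h1, GG.self]
    norm_num
  · rw [GG.gt (show (((0+1)/2 + L/2 : ℕ) : ℤ) < ((L/2 : ℕ) : ℤ) + k from by simp; omega)]
    rw [if_neg (by omega)]
    ring

lemma card_rec (P L : ℕ) (k : ℤ) (n : ℕ) (hP : 1 ≤ P) :
    Nat.card (TPa P (L+1) k n) = Nat.card (TPa P L k n) +
      (if L + 1 ≤ n then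
        Nat.card (TPa (P-1) (L+1) ((((L+1) % 2 : ℕ) : ℤ) - k) (n - (L+1))) else 0) := by
  rw [Nat.card_congr (equivSplit P L k n), Nat.card_sum]
  congr 1
  split_ifs with h
  · exact Nat.card_congr (equivSub P L k n hP h)
  · haveI := TQa_empty P L k n (by omega)
    exact Nat.card_of_isEmpty

lemma card_L0 (P : ℕ) (k : ℤ) (n : ℕ) :
    Nat.card (TPa P 0 k n) = if n = 0 ∧ k = 0 then 1 else 0 := by
  split_ifs with h
  · obtain ⟨rfl, rfl⟩ := h
    haveI : Unique (TPa P 0 0 0) := by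
      refine ⟨⟨⟨[], rfl, List.isChain_nil, by simp, rfl, rfl⟩⟩, ?_⟩
      intro x
      apply Subtype.ext
      exact List.eq_nil_of_length_eq_zero x.2.1
    exact Nat.card_unique
  · haveI : IsEmpty (TPa P 0 k n) := by
      constructor
      rintro ⟨l, hlen, _, _, hsum, hbg⟩
      have : l = [] := List.eq_nil_of_length_eq_zero hlen
      subst this
      simp [bgRank_nil] at hsum hbg
      exact h ⟨hsum.symm, hbg.symm⟩
    exact Nat.card_of_isEmpty

lemma bgRank_replicate_zero (L : ℕ) : bgRank (List.replicate L 0) = 0 := by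
  have := bgRank_append_replicate_zero [] L
  simpa [bgRank_nil] using this

lemma card_P0 (L : ℕ) (k : ℤ) (n : ℕ) :
    Nat.card (TPa 0 L k n) = if n = 0 ∧ k = 0 then 1 else 0 := by
  have hrep : ∀ l : List ℕ, l.length = L → (∀ p ∈ l, p ≤ 0) → l = List.replicate L 0 := by
    intro l hlen hbd
    exact List.eq_replicate_iff.2 ⟨hlen, fun b hb => by have := hbd b hb; omega⟩
  split_ifs with h
  · obtain ⟨rfl, rfl⟩ := h
    haveI : Unique (TPa 0 L 0 0) := by
      refine ⟨⟨⟨List.replicate L 0, by simp, ?_, by simp, by simp, bgRank_replicate_zero L⟩⟩, ?_⟩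
      · exact chain'_of_pairwise_ge (List.pairwise_replicate.2 (by simp))
      · intro x
        exact Subtype.ext (hrep x.1 x.2.1 x.2.2.2.1)
    exact Nat.card_unique
  · haveI : IsEmpty (TPa 0 L k n) := by
      constructor
      rintro ⟨l, hlen, hch, hbd, hsum, hbg⟩
      have hl := hrep l hlen hbd
      subst hl
      rw [bgRank_replicate_zero] at hbg
      simp at hsum
      exact h ⟨hsum.symm, hbg.symm⟩
    exact Nat.card_of_isEmpty

lemma mk_delta (k : ℤ) :
    (PowerSeries.mk fun n => ((if n = 0 ∧ k = 0 then 1 else 0 : ℕ) : ℚ)) =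
      if k = 0 then 1 else 0 := by
  split_ifs with h
  · subst h
    ext m
    simp [PowerSeries.coeff_mk, PowerSeries.coeff_one]
  · ext m
    simp [PowerSeries.coeff_mk, h]

lemma mk_TPa (s : ℕ) : ∀ P L, P + L ≤ s → ∀ k,
    (PowerSeries.mk fun n => (Nat.card (TPa P L k n) : ℚ)) = RS P L k := by
  induction s with
  | zero =>
    intro P L h k
    obtain ⟨rfl, rfl⟩ : P = 0 ∧ L = 0 := by omega
    rw [RS_L0]
    simp only [card_L0]
    exact mk_delta k
  | succ s ih =>
    intro P L h k
    cases L with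
    | zero =>
      rw [RS_L0]
      simp only [card_L0]
      exact mk_delta k
    | succ L =>
      rcases Nat.eq_zero_or_pos P with rfl | hP
      · rw [RS_P0]
        simp only [card_P0]
        exact mk_delta k
      · have key : (PowerSeries.mk fun n => (Nat.card (TPa P (L+1) k n) : ℚ)) =
            (PowerSeries.mk fun n => (Nat.card (TPa P L k n) : ℚ)) +
            PowerSeries.X ^ (L+1) * (PowerSeries.mk fun n =>
              (Nat.card (TPa (P-1) (L+1) ((((L+1) % 2 : ℕ) : ℤ) - k) n) : ℚ)) := by
          ext m
          rw [map_add, PowerSeries.coeff_X_pow_mul']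
          simp only [PowerSeries.coeff_mk]
          rw [card_rec P L k m hP]
          push_cast
          split_ifs with hm
          · rfl
          · simp
        rw [key, ih P L (by omega) k, ih (P-1) (L+1) (by omega) _, RS_rec P L hP k]

def TSa (P L : ℕ) (k : ℤ) (n : ℕ) : Type :=
  {π : List ℕ // IsPartition π ∧ (∀ p ∈ π, p ≤ P) ∧ π.length ≤ L ∧
    π.sum = n ∧ bgRank π = k}

lemma takeWhile_append_all {p : ℕ → Bool} {l₁ l₂ : List ℕ} (h : ∀ x ∈ l₁, p x = true) :
    (l₁ ++ l₂).takeWhile p = l₁ ++ l₂.takeWhile p := by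
  induction l₁ with
  | nil => simp
  | cons a t ih =>
    rw [List.cons_append, List.takeWhile_cons_of_pos (h a (by simp)), List.cons_append,
      ih (fun x hx => h x (by simp [hx]))]

lemma takeWhile_ne_replicate_zero (j : ℕ) :
    (List.replicate j 0).takeWhile (fun x => x != 0) = [] := by
  cases j with
  | zero => rfl
  | succ j => rw [List.replicate_succ, List.takeWhile_cons_of_neg (by simp)]

def equivPad (P L : ℕ) (k : ℤ) (n : ℕ) : TSa P L k n ≃ TPa P L k n where
  toFun x := ⟨x.1 ++ List.replicate (L - x.1.length) 0, by
    have hch := x.2.1.1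
    have hpos := x.2.1.2
    have hbd := x.2.2.1
    have hlen := x.2.2.2.1
    have hsum := x.2.2.2.2.1
    have hbg := x.2.2.2.2.2
    refine ⟨by simp; omega, chain'_ge_append_zeros hch _, fun p hp => ?_,
      by simp [hsum], by rw [bgRank_append_replicate_zero, hbg]⟩
    rcases List.mem_append.1 hp with h | h
    · exact hbd p h
    · simp at h; omega⟩
  invFun x := ⟨x.1.takeWhile (fun y => y != 0), by
    have hlen := x.2.1
    have hch := x.2.2.1
    have hbd := x.2.2.2.1
    have hsum := x.2.2.2.2.1
    have hbg := x.2.2.2.2.2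
    have hdrop : ∀ y ∈ x.1.dropWhile (fun y => y != 0), y = 0 := dropWhile_eq_zeros hch
    have hrep : x.1.dropWhile (fun y => y != 0) =
        List.replicate (x.1.dropWhile (fun y => y != 0)).length 0 :=
      List.eq_replicate_iff.2 ⟨rfl, hdrop⟩
    have hsplit : x.1.takeWhile (fun y => y != 0) ++ x.1.dropWhile (fun y => y != 0) = x.1 :=
      List.takeWhile_append_dropWhile
    refine ⟨⟨chain'_ge_takeWhile hch _, fun p hp => ?_⟩,
      fun p hp => hbd p ((List.takeWhile_sublist _).subset hp), ?_, ?_, ?_⟩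
    · have := List.mem_takeWhile_imp hp
      simp at this
      omega
    · have := (List.takeWhile_sublist (l := x.1) (fun y => y != 0)).length_le
      omega
    · have := congrArg List.sum hsplit
      rw [List.sum_append] at this
      have hz : (x.1.dropWhile (fun y => y != 0)).sum = 0 :=
        List.sum_eq_zero (fun y hy => hdrop y hy)
      omega
    · conv_rhs => rw [← hbg, ← hsplit]
      rw [hrep, bgRank_append_replicate_zero]⟩
  left_inv := by
    intro x
    apply Subtype.ext
    show (x.1 ++ List.replicate (L - x.1.length) 0).takeWhile (fun y => y != 0) = x.1
    rw [takeWhile_append_all (fun y hy => by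
      have := x.2.1.2 y hy
      simp
      omega), takeWhile_ne_replicate_zero, List.append_nil]
  right_inv := by
    intro x
    apply Subtype.ext
    show x.1.takeWhile (fun y => y != 0) ++
      List.replicate (L - (x.1.takeWhile (fun y => y != 0)).length) 0 = x.1
    have hch := x.2.2.1
    have hlen := x.2.1
    have hdrop : ∀ y ∈ x.1.dropWhile (fun y => y != 0), y = 0 := dropWhile_eq_zeros hch
    have hrep : x.1.dropWhile (fun y => y != 0) =
        List.replicate (x.1.dropWhile (fun y => y != 0)).length 0 :=
      List.eq_replicate_iff.2 ⟨rfl, hdrop⟩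
    have hsplit : x.1.takeWhile (fun y => y != 0) ++ x.1.dropWhile (fun y => y != 0) = x.1 :=
      List.takeWhile_append_dropWhile
    have hlen2 : (x.1.takeWhile (fun y => y != 0)).length +
        (x.1.dropWhile (fun y => y != 0)).length = L := by
      have h2 := congrArg List.length hsplit
      rw [List.length_append] at h2
      omega
    conv_rhs => rw [← hsplit]
    rw [hrep]
    congr 2
    omega

end Assembly

theorem stmt18 (N M ν μ : ℕ) (hν : ν ≤ 1) (hμ : μ ≤ 1)
    (hN : 0 < 2 * N + ν) (hM : 0 < 2 * M + μ) (k : ℤ) :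
    PowerSeries.mk (fun n =>
      (Nat.card {π : List ℕ // IsPartition π ∧ (∀ p ∈ π, p ≤ 2 * N + ν) ∧
        π.length ≤ 2 * M + μ ∧ π.sum = n ∧ bgRank π = k} : ℚ)) =
    PowerSeries.X ^ (2 * k ^ 2 - k).toNat *
      Polynomial.aeval (PowerSeries.X ^ 2 : PowerSeries ℚ)
        (gaussZ (N + M + μ) ((N : ℤ) + k) * gaussZ (N + ν + M) ((M : ℤ) + k)) := by
  have h1 : (2*N+ν)/2 = N := by omega
  have h2 : (2*M+μ+1)/2 = M + μ := by omega
  have h3 : (2*N+ν+1)/2 = N + ν := by omega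
  have h4 : (2*M+μ)/2 = M := by omega
  have hcard : (PowerSeries.mk (fun n =>
      (Nat.card {π : List ℕ // IsPartition π ∧ (∀ p ∈ π, p ≤ 2 * N + ν) ∧
        π.length ≤ 2 * M + μ ∧ π.sum = n ∧ bgRank π = k} : ℚ))) =
      PowerSeries.mk (fun n => (Nat.card (TPa (2*N+ν) (2*M+μ) k n) : ℚ)) := by
    exact congrArg PowerSeries.mk (funext fun n =>
      congrArg (Nat.cast : ℕ → ℚ) (Nat.card_congr (equivPad (2*N+ν) (2*M+μ) k n)))
  rw [hcard, mk_TPa ((2*N+ν) + (2*M+μ)) (2*N+ν) (2*M+μ) le_rfl k]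
  unfold RS
  rw [h1, h2, h3, h4]
  rw [map_mul]
  show _ * (gg (N + (M+μ)) _ * gg ((N+ν) + M) _) = _ * (gg (N+M+μ) _ * gg (N+ν+M) _)
  rw [show N + (M + μ) = N + M + μ from by omega]
end

section
/- Let μ ∈ {0,1}, and let N, 2M+μ be positive integers, n, k non-negative integers. Then the number of partitions of n into parts ≤ 2M+μ with at most N parts, exactly k of which are odd, equals the number of partitions of n into parts ≤ N with at most 2M+μ parts whose alternating sum of parts equals k. -/
lemma headI_mem' {l : List ℕ} (h : l ≠ []) : l.headI ∈ l := by
  cases l with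
  | nil => exact absurd rfl h
  | cons a t => simp [List.headI]

def conj (π : List ℕ) : List ℕ :=
  (List.range π.headI).map fun i => π.countP fun p => decide (i < p)

lemma headI_max {π : List ℕ} (hc : π.Chain' (· ≥ ·)) {p : ℕ} (hp : p ∈ π) : p ≤ π.headI := by
  cases π with
  | nil => simp at hp
  | cons a t =>
    have := List.isChain_iff_pairwise.mp hc
    rcases List.mem_cons.mp hp with rfl | h
    · simp
    · exact (List.pairwise_cons.mp this).1 p h

lemma getElem_anti {π : List ℕ} (hc : π.Chain' (· ≥ ·)) {i j : ℕ} (hij : i ≤ j)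
    (hj : j < π.length) : π[j]'hj ≤ π[i]'(lt_of_le_of_lt hij hj) := by
  rcases eq_or_lt_of_le hij with rfl | h
  · exact le_refl _
  · exact List.pairwise_iff_getElem.mp (List.isChain_iff_pairwise.mp hc) i j _ hj h

lemma countP_range (a b : ℕ) : (List.range a).countP (fun i => decide (i < b)) = min b a := by
  induction a with
  | zero => simp
  | succ a ih =>
    rw [List.range_succ, List.countP_append, ih]
    simp only [List.countP_cons, List.countP_nil, decide_eq_true_eq]
    split <;> omega

lemma key_iff {π : List ℕ} (hc : π.Chain' (· ≥ ·)) {i j : ℕ} (hj : j < π.length) :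
    j < π.countP (fun p => decide (i < p)) ↔ i < π[j]'hj := by
  constructor
  · intro hcount
    by_contra hle
    push_neg at hle
    have hsplit : π.countP (fun p => decide (i < p)) =
        (π.take j).countP (fun p => decide (i < p)) +
        (π.drop j).countP (fun p => decide (i < p)) := by
      rw [← List.countP_append, List.take_append_drop]
    have hdrop : (π.drop j).countP (fun p => decide (i < p)) = 0 := by
      rw [List.countP_eq_zero]
      intro x hx
      obtain ⟨m, hm, rfl⟩ := List.mem_iff_getElem.mp hx
      have hjm : j + m < π.length := by
        have := hm
        simp only [List.length_drop] at this
        omega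
      rw [List.getElem_drop]
      simp only [decide_eq_true_eq, not_lt]
      calc π[j + m] ≤ π[j]'hj := getElem_anti hc (Nat.le_add_right j m) _
        _ ≤ i := hle
    have htake : (π.take j).countP (fun p => decide (i < p)) ≤ j := by
      calc (π.take j).countP (fun p => decide (i < p)) ≤ (π.take j).length :=
            List.countP_le_length
        _ ≤ j := by simp [List.length_take]
    omega
  · intro hij
    have hlen : (π.take (j + 1)).length = j + 1 := by
      simp [List.length_take]; omega
    have htake : (π.take (j + 1)).countP (fun p => decide (i < p)) = j + 1 := by
      rw [List.countP_eq_length.mpr, hlen]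
      intro x hx
      obtain ⟨m, hm, rfl⟩ := List.mem_iff_getElem.mp hx
      rw [List.getElem_take]
      simp only [decide_eq_true_eq]
      have hmj : m ≤ j := by omega
      calc i < π[j]'hj := hij
        _ ≤ π[m] := getElem_anti hc hmj hj
    have := ((List.take_sublist (j + 1) π).countP_le (p := fun p => decide (i < p)))
    omega

lemma conj_length (π : List ℕ) : (conj π).length = π.headI := by simp [conj]

lemma conj_isPartition (π : List ℕ) : IsPartition (conj π) := by
  constructor
  · refine List.Pairwise.isChain ?_
    rw [conj, List.pairwise_map]
    refine (List.pairwise_lt_range (n := _)).imp ?_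
    intro i j hij
    refine List.countP_mono_left ?_
    intro p _ hp
    simp only [decide_eq_true_eq] at *
    omega
  · intro p hp
    rw [conj, List.mem_map] at hp
    obtain ⟨i, hi, rfl⟩ := hp
    rw [List.mem_range] at hi
    have hne : π ≠ [] := by
      intro h; rw [h] at hi; simp at hi
    refine List.countP_pos_iff.mpr ⟨π.headI, headI_mem' hne, by simpa using hi⟩

lemma conj_parts_le (π : List ℕ) {p : ℕ} (hp : p ∈ conj π) : p ≤ π.length := by
  rw [conj, List.mem_map] at hp
  obtain ⟨i, _, rfl⟩ := hp
  exact List.countP_le_length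

lemma conj_headI {π : List ℕ} (hpos : ∀ p ∈ π, 0 < p) : (conj π).headI = π.length := by
  rcases eq_or_ne π.headI 0 with h0 | h0
  · have : π = [] := by
      cases π with
      | nil => rfl
      | cons a t => exact absurd (hpos a (by simp)) (by simp [List.headI] at h0; omega)
    simp [this, conj]
  · have : List.range π.headI = 0 :: (List.range (π.headI - 1)).map Nat.succ := by
      rw [← List.range_succ_eq_map]; congr 1; omega
    rw [conj, this]
    simp only [List.map_cons, List.headI]
    rw [List.countP_eq_length.mpr]
    intro p hp
    simpa using hpos p hp

lemma conj_conj {π : List ℕ} (h : IsPartition π) : conj (conj π) = π := by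
  obtain ⟨hc, hpos⟩ := h
  refine List.ext_getElem ?_ ?_
  · rw [conj_length, conj_headI hpos]
  · intro j h1 h2
    have hj : j < π.length := h2
    have hlen : j < (List.range (conj π).headI).length := by
      simpa [conj_headI hpos] using hj
    simp only [conj, List.getElem_map, List.getElem_range, List.countP_map]
    have hcongr : ∀ x ∈ List.range π.headI,
        (((fun c => decide (j < c)) ∘ fun i => π.countP fun p => decide (i < p)) x = true ↔
          (fun i => decide (i < π[j]'hj)) x = true) := by
      intro i _
      simp only [Function.comp_apply, decide_eq_true_eq]
      exact key_iff hc hj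
    rw [List.countP_congr hcongr, countP_range]
    have : π[j]'hj ≤ π.headI := headI_max hc (List.getElem_mem hj)
    omega

lemma sum_map_range (g : ℕ → ℕ) (m : ℕ) :
    ((List.range m).map g).sum = ∑ i ∈ Finset.range m, g i := by
  induction m with
  | zero => simp
  | succ m ih => rw [List.range_succ, Finset.sum_range_succ]; simp [ih]

lemma range_filter_lt (a p : ℕ) :
    (Finset.range a).filter (fun i => i < p) = Finset.range (min p a) := by
  ext i; simp; omega

lemma conj_sum {π : List ℕ} (hc : π.Chain' (· ≥ ·)) : (conj π).sum = π.sum := by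
  rw [show conj π = _ from rfl, conj]
  rw [sum_map_range]
  have hbd : ∀ p ∈ π, p ≤ π.headI := fun p hp => headI_max hc hp
  generalize π.headI = a at hbd
  clear hc
  induction π with
  | nil => simp
  | cons p t ih =>
    have hpa : p ≤ a := hbd p (by simp)
    simp only [List.countP_cons, decide_eq_true_eq]
    rw [Finset.sum_add_distrib, ih (fun q hq => hbd q (by simp [hq]))]
    have : (∑ i ∈ Finset.range a, if i < p then 1 else 0) = p := by
      rw [Finset.sum_boole, range_filter_lt, Finset.card_range]
      simp; omega
    simp only [List.sum_cons]
    omega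

lemma altSum_map_range (g : ℕ → ℕ) (m : ℕ) :
    altSum ((List.range m).map g) = ∑ i ∈ Finset.range m, (-1 : ℤ) ^ i * g i := by
  induction m generalizing g with
  | zero => simp [altSum]
  | succ m ih =>
    rw [List.range_succ_eq_map, List.map_cons, List.map_map]
    show (g 0 : ℤ) - altSum _ = _
    rw [ih (g ∘ Nat.succ), Finset.sum_range_succ']
    simp only [Function.comp_apply, pow_succ, pow_zero, one_mul]
    have : ∀ x ∈ Finset.range m, (-1 : ℤ) ^ x * -1 * (g (x + 1) : ℤ)
        = -((-1 : ℤ) ^ x * (g x.succ : ℤ)) := fun x _ => by ring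
    rw [Finset.sum_congr rfl this, Finset.sum_neg_distrib]
    ring

lemma neg_one_pow_sum (p : ℕ) : ∑ i ∈ Finset.range p, (-1 : ℤ) ^ i = (p % 2 : ℕ) := by
  induction p with
  | zero => simp
  | succ p ih =>
    rw [Finset.sum_range_succ, ih]
    rcases Nat.even_or_odd p with h | h
    · rw [h.neg_one_pow]
      have : p % 2 = 0 := Nat.even_iff.mp h
      have : (p + 1) % 2 = 1 := by omega
      simp [*]
    · rw [h.neg_one_pow]
      have : p % 2 = 1 := Nat.odd_iff.mp h
      have : (p + 1) % 2 = 0 := by omega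
      simp [*]

lemma altSum_conj {π : List ℕ} (hc : π.Chain' (· ≥ ·)) :
    altSum (conj π) = ((π.filter fun p => p % 2 == 1).length : ℤ) := by
  rw [show conj π = _ from rfl, conj]
  rw [altSum_map_range]
  have hbd : ∀ p ∈ π, p ≤ π.headI := fun p hp => headI_max hc hp
  generalize π.headI = a at hbd
  clear hc
  induction π with
  | nil => simp
  | cons p t ih =>
    have hpa : p ≤ a := hbd p (by simp)
    simp only [List.countP_cons, decide_eq_true_eq]
    have hsplit : ∀ i : ℕ,
        (-1 : ℤ) ^ i * ((t.countP fun q => decide (i < q)) + if i < p then 1 else 0)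
        = (-1 : ℤ) ^ i * (t.countP fun q => decide (i < q)) +
          (if i < p then (-1 : ℤ) ^ i else 0) := by
      intro i; split <;> ring
    push_cast
    simp only [hsplit]
    rw [Finset.sum_add_distrib]
    have h1 : (∑ i ∈ Finset.range a, if i < p then (-1 : ℤ) ^ i else 0) = (p % 2 : ℕ) := by
      rw [← Finset.sum_filter, range_filter_lt, min_eq_left hpa, neg_one_pow_sum]
    have h2 := ih (fun q hq => hbd q (by simp [hq]))
    push_cast at h2
    rw [h1, h2]
    rcases Nat.mod_two_eq_zero_or_one p with hp2 | hp2 <;>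
      simp [List.filter_cons, hp2] <;> push_cast <;> ring

lemma headI_le_of_forall {π : List ℕ} {B : ℕ} (hB : 0 < B) (h : ∀ p ∈ π, p ≤ B) :
    π.headI ≤ B := by
  cases π with
  | nil => simpa using hB.le
  | cons a t => exact h a (by simp)

lemma odd_count_conj {π : List ℕ} (h : IsPartition π) :
    ((conj π).filter fun p => p % 2 == 1).length = (altSum π).toNat ∧
      altSum π = (((conj π).filter fun p => p % 2 == 1).length : ℤ) := by
  have h1 := altSum_conj (conj_isPartition π).1
  rw [conj_conj h] at h1
  exact ⟨by omega, h1⟩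

theorem stmt19 (N M μ n k : ℕ) (hμ : μ ≤ 1) (hN : 0 < N) (hM : 0 < 2 * M + μ) :
    Nat.card {π : List ℕ // IsPartition π ∧ (∀ p ∈ π, p ≤ 2 * M + μ) ∧ π.length ≤ N ∧
      π.sum = n ∧ (π.filter fun p => p % 2 == 1).length = k} =
    Nat.card {π : List ℕ // IsPartition π ∧ (∀ p ∈ π, p ≤ N) ∧ π.length ≤ 2 * M + μ ∧
      π.sum = n ∧ altSum π = (k : ℤ)} := by
  apply Nat.card_congr
  refine ⟨fun x => ⟨conj x.1, ?_⟩, fun y => ⟨conj y.1, ?_⟩, ?_, ?_⟩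
  · obtain ⟨π, hpart, hle, hlen, hsum, hk⟩ := x
    refine ⟨conj_isPartition π, fun p hp => le_trans (conj_parts_le π hp) hlen, ?_, ?_, ?_⟩
    · rw [conj_length]; exact headI_le_of_forall hM hle
    · rw [conj_sum hpart.1, hsum]
    · rw [altSum_conj hpart.1, hk]
  · obtain ⟨σ, hpart, hle, hlen, hsum, hk⟩ := y
    refine ⟨conj_isPartition σ, fun p hp => le_trans (conj_parts_le σ hp) hlen, ?_, ?_, ?_⟩
    · rw [conj_length]; exact headI_le_of_forall hN hle
    · rw [conj_sum hpart.1, hsum]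
    · have := (odd_count_conj hpart).2
      rw [hk] at this
      exact_mod_cast this.symm
  · intro x; exact Subtype.ext (conj_conj x.2.1)
  · intro y; exact Subtype.ext (conj_conj y.2.1)
end
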